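/- Let G be a group acting on a ring B by ring automorphisms, with invariant subring A = B^G. If G is finite and B is an integral domain, then B is integral over A, and hence the map Spec B → Spec A is surjective; moreover G acts transitively on the fibers of Spec B → Spec A. -/

import Mathlib

/-- The subring of fixed points of a multiplicative semiring action of a group. -/
def fixedSubring (G B : Type*) [Monoid G] [CommRing B] [MulSemiringAction G B] :
    Subring B where
  carrier := {b : B | ∀ g : G, g • b = b}
  mul_mem' := fun {a b} ha hb g => by rw [smul_mul', ha g, hb g]
  one_mem' := fun g => smul_one g
  add_mem' := fun {a b} ha hb g => by rw [smul_add, ha g, hb g]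
  zero_mem' := fun g => smul_zero g
  neg_mem' := fun {a} ha g => by rw [smul_neg, ha g]

open Pointwise

lemma fixedSubring_isIntegral (G B : Type*) [Group G] [Finite G] [CommRing B]
    [MulSemiringAction G B] : Algebra.IsIntegral (fixedSubring G B) B := by
  have := Fintype.ofFinite G
  constructor
  intro x
  refine ⟨(prodXSubSMul G B x).toSubring (fixedSubring G B) ?_, ?_, ?_⟩
  · intro c hc g
    obtain ⟨n, _, hn⟩ := Polynomial.mem_coeffs_iff.1 hc
    exact hn ▸ prodXSubSMul.coeff G B x g n
  · refine (Polynomial.monic_toSubring ..).2 ?_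
    exact prodXSubSMul.monic G B x
  · show Polynomial.eval₂ _ x _ = 0
    rw [Polynomial.eval₂_eq_eval_map]
    have : algebraMap (fixedSubring G B) B = (fixedSubring G B).subtype := rfl
    rw [this]
    convert prodXSubSMul.eval G B x using 2
    exact Polynomial.map_toSubring ..

lemma comap_smul_eq (G B : Type*) [Group G] [CommRing B] [MulSemiringAction G B]
    (Q : Ideal B) (g : G) :
    (g • Q).comap (algebraMap (fixedSubring G B) B) =
      Q.comap (algebraMap (fixedSubring G B) B) := by
  ext a
  simp only [Ideal.mem_comap]
  rw [Ideal.mem_pointwise_smul_iff_inv_smul_mem]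
  have ha : g⁻¹ • (algebraMap (fixedSubring G B) B a) = algebraMap (fixedSubring G B) B a :=
    a.2 g⁻¹
  rw [ha]

theorem finite_group_action_integral_surjective_transitive
    (G B : Type*) [Group G] [Finite G] [CommRing B] [IsDomain B]
    [MulSemiringAction G B] :
    Algebra.IsIntegral (fixedSubring G B) B ∧
    Function.Surjective
      (PrimeSpectrum.comap (algebraMap (fixedSubring G B) B)) ∧
    ∀ P Q : PrimeSpectrum B,
      PrimeSpectrum.comap (algebraMap (fixedSubring G B) B) P =
        PrimeSpectrum.comap (algebraMap (fixedSubring G B) B) Q →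
      ∃ g : G, ∀ b : B, b ∈ P.asIdeal ↔ g • b ∈ Q.asIdeal := by
  classical
  have := Fintype.ofFinite G
  have hint := fixedSubring_isIntegral G B
  refine ⟨hint, ?_, ?_⟩
  · -- surjectivity
    intro p
    have hker : RingHom.ker (algebraMap (fixedSubring G B) B) ≤ p.asIdeal := by
      intro a ha
      have : (a : B) = 0 := ha
      have : a = 0 := Subtype.ext this
      simp [this]
    obtain ⟨Q, hQ, hQ'⟩ :=
      Ideal.exists_ideal_over_prime_of_isIntegral_of_isDomain p.asIdeal hker
    exact ⟨⟨Q, hQ⟩, PrimeSpectrum.ext hQ'⟩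
  · -- transitivity
    intro P Q hPQ
    have hPQ' : P.asIdeal.comap (algebraMap (fixedSubring G B) B) =
        Q.asIdeal.comap (algebraMap (fixedSubring G B) B) := congrArg PrimeSpectrum.asIdeal hPQ
    have hsub : (P.asIdeal : Set B) ⊆
        ⋃ g ∈ ((Finset.univ : Finset G) : Set G), ((g • Q.asIdeal : Ideal B) : Set B) := by
      intro x hx
      set a : B := ∏ g : G, g • x with ha_def
      have hfix : ∀ h : G, h • a = a := by
        intro h
        rw [ha_def, Finset.smul_prod']
        exact Fintype.prod_equiv (Equiv.mulLeft h) _ _ fun g => by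
          simp [mul_smul]
      have haP : a ∈ P.asIdeal := by
        have h1 : (1 : G) • x * ∏ g ∈ Finset.univ.erase (1 : G), g • x = a :=
          Finset.mul_prod_erase Finset.univ (fun g => g • x) (Finset.mem_univ 1)
        rw [← h1, one_smul]
        exact P.asIdeal.mul_mem_right _ hx
      have haQ : a ∈ Q.asIdeal := by
        have : (⟨a, hfix⟩ : fixedSubring G B) ∈
            P.asIdeal.comap (algebraMap (fixedSubring G B) B) := haP
        rw [hPQ'] at this
        exact this
      have : ∃ g : G, g • x ∈ Q.asIdeal := by
        rw [ha_def] at haQ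
        rcases (Ideal.IsPrime.prod_mem_iff (hp := Q.isPrime)).1 haQ with ⟨g, _, hg⟩
        exact ⟨g, hg⟩
      obtain ⟨g, hg⟩ := this
      refine Set.mem_biUnion (Finset.mem_coe.2 (Finset.mem_univ g⁻¹)) ?_
      rw [SetLike.mem_coe, Ideal.mem_inv_pointwise_smul_iff]
      exact hg
    obtain ⟨g, -, hle⟩ := (Ideal.subset_union_prime (1 : G) (1 : G)
      (fun i _ _ _ => Q.isPrime.smul i)).1 hsub
    have heq : P.asIdeal = g • Q.asIdeal := by
      by_contra hne
      obtain ⟨x, hxJ, hxP⟩ : ∃ x, x ∈ (g • Q.asIdeal : Ideal B) ∧ x ∉ P.asIdeal := by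
        by_contra h
        push_neg at h
        exact hne (le_antisymm hle h)
      have hlt := Ideal.comap_lt_comap_of_integral_mem_sdiff (hI := P.isPrime) hle
        ⟨hxJ, hxP⟩ (Algebra.IsIntegral.isIntegral (R := fixedSubring G B) x)
      rw [comap_smul_eq, ← hPQ'] at hlt
      exact lt_irrefl _ hlt
    refine ⟨g⁻¹, fun b => ?_⟩
    rw [heq, Ideal.mem_pointwise_smul_iff_inv_smul_mem]
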